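/- Let n ≥ 1, let d be a positive integer, let c ∈ F_q^* and b ∈ F_q, and let N be the number of pairs (x, y) ∈ F_q × F_q satisfying x^d + c·y^d = b and (x+1)^d + c^{−1}·(y+1)^d = b. Then 2^{2n}·N = Σ_{α, β ∈ F_q} χ1(b·(α + β)) · T(α, β) · T(c·α, c^{−1}·β), where T(α, β) = Σ_{x ∈ F_q} χ1(α·x^d + β·(x+1)^d). -/
import Mathlib

/-- The absolute trace map `Tr : F → F_2`, viewed inside `F` (its values lie in `{0,1}`),
for a field `F` with `2^n` elements. -/
def absTr (n : ℕ) {F : Type*} [Field F] (x : F) : F :=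
  ∑ i ∈ Finset.range n, x ^ (2 ^ i)

/-- The canonical additive character `χ1(x) = (−1)^{Tr(x)} ∈ ℤ`. -/
def chi (n : ℕ) {F : Type*} [Field F] [DecidableEq F] (x : F) : ℤ :=
  if absTr n x = 0 then 1 else -1

section Aux

variable {n : ℕ} {F : Type*} [Field F]

lemma absTr_zero : absTr n (0 : F) = 0 := by
  refine Finset.sum_eq_zero fun i _ => ?_
  exact zero_pow (by positivity)

lemma absTr_add [CharP F 2] (x y : F) : absTr n (x + y) = absTr n x + absTr n y := by
  unfold absTr
  rw [← Finset.sum_add_distrib]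
  exact Finset.sum_congr rfl fun i _ => add_pow_char_pow x y 2 i

lemma absTr_mem [Fintype F] [CharP F 2] (hcard : Fintype.card F = 2 ^ n) (x : F) :
    absTr n x = 0 ∨ absTr n x = 1 := by
  have hx : x ^ (2 ^ n) = x := by rw [← hcard]; exact FiniteField.pow_card x
  have hsq : (absTr n x) ^ 2 = absTr n x := by
    unfold absTr
    rw [sum_pow_char]
    have h0 : ∀ i ∈ Finset.range n, (x ^ 2 ^ i) ^ 2 = x ^ 2 ^ (i + 1) := by
      intro i _; rw [← pow_mul, pow_succ]
    rw [Finset.sum_congr rfl h0]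
    have h1 : ∑ i ∈ Finset.range n, x ^ 2 ^ (i + 1)
        = (∑ i ∈ Finset.range (n + 1), x ^ 2 ^ i) - x ^ 2 ^ 0 := by
      rw [Finset.sum_range_succ']; ring
    rw [h1, Finset.sum_range_succ, hx, pow_zero, pow_one]; ring
  have h : absTr n x * (absTr n x - 1) = 0 := by
    rw [mul_sub, mul_one, ← sq, hsq, sub_self]
  rcases mul_eq_zero.mp h with h | h
  · exact Or.inl h
  · exact Or.inr (by linear_combination h)

variable [DecidableEq F]

lemma chi_zero : chi n (0 : F) = 1 := by simp [chi, absTr_zero]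

lemma chi_add [Fintype F] [CharP F 2] (hcard : Fintype.card F = 2 ^ n) (x y : F) :
    chi n (x + y) = chi n x * chi n y := by
  unfold chi
  rw [absTr_add]
  rcases absTr_mem hcard x with hx | hx <;> rcases absTr_mem hcard y with hy | hy <;>
    simp [hx, hy, CharTwo.add_self_eq_zero, one_ne_zero]

lemma exists_tr_ne_zero [Fintype F] (hn : 1 ≤ n) (hcard : Fintype.card F = 2 ^ n) :
    ∃ s : F, absTr n s ≠ 0 := by
  by_contra h
  push_neg at h
  set p : Polynomial F := ∑ i ∈ Finset.range n, Polynomial.X ^ (2 ^ i) with hp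
  have heval : ∀ s : F, p.eval s = 0 := by
    intro s
    rw [hp, Polynomial.eval_finset_sum]
    simpa [absTr] using h s
  have hdeg : p.natDegree ≤ 2 ^ (n - 1) := by
    apply Polynomial.natDegree_sum_le_of_forall_le
    intro i hi
    rw [Polynomial.natDegree_X_pow]
    exact Nat.pow_le_pow_right (by norm_num) (Nat.le_pred_of_lt (Finset.mem_range.mp hi))
  have hzero : p = 0 := by
    apply Polynomial.eq_zero_of_natDegree_lt_card_of_eval_eq_zero p Function.injective_id
      (fun i => heval i)
    rw [hcard]
    calc p.natDegree ≤ 2 ^ (n - 1) := hdeg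
      _ < 2 ^ n := Nat.pow_lt_pow_right one_lt_two (by omega)
  have hco : p.coeff 1 = 1 := by
    rw [hp, Polynomial.finset_sum_coeff]
    rw [Finset.sum_eq_single_of_mem 0 (Finset.mem_range.mpr hn)]
    · simp
    · intro i _ hi
      rw [Polynomial.coeff_X_pow]
      have : (2 : ℕ) ^ i ≠ 1 := by
        have : 2 ≤ 2 ^ i := Nat.one_lt_two_pow (by omega)
        omega
      simp [this, Ne.symm this]
  rw [hzero] at hco
  simp at hco

lemma sum_chi_eq_zero [Fintype F] [CharP F 2] (hn : 1 ≤ n)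
    (hcard : Fintype.card F = 2 ^ n) : ∑ t : F, chi n t = 0 := by
  obtain ⟨s, hs⟩ := exists_tr_ne_zero hn hcard
  have h4 : ∑ t : F, chi n (t + s) = ∑ t : F, chi n t :=
    Fintype.sum_bijective (· + s) (Equiv.addRight s).bijective _ _ (fun t => rfl)
  have h3 : ∀ t : F, chi n (t + s) = - chi n t := by
    intro t
    rw [chi_add hcard]
    simp [chi, hs]
  have h5 : ∑ t : F, chi n t = - ∑ t : F, chi n t := by
    calc ∑ t : F, chi n t = ∑ t : F, chi n (t + s) := h4.symm
      _ = ∑ t : F, - chi n t := Finset.sum_congr rfl fun t _ => h3 t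
      _ = - ∑ t : F, chi n t := by rw [Finset.sum_neg_distrib]
  linarith

lemma sum_chi_mul [Fintype F] [CharP F 2] (hn : 1 ≤ n) (hcard : Fintype.card F = 2 ^ n)
    (u : F) : ∑ α : F, chi n (α * u) = if u = 0 then ((2 : ℤ) ^ n) else 0 := by
  split_ifs with hu
  · subst hu
    simp only [mul_zero, chi_zero]
    simp [hcard]
  · have hbij : ∑ α : F, chi n (α * u) = ∑ t : F, chi n t :=
      Fintype.sum_bijective (· * u) (Equiv.mulRight₀ u hu).bijective _ _ (fun t => rfl)
    rw [hbij, sum_chi_eq_zero hn hcard]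

end Aux

/-- For a power map `x ↦ x^d` on the field `F` with `2^n` elements, `c ≠ 0` and `b`:
`2^{2n} · N = Σ_{α,β} χ1(b(α+β)) T(α,β) T(cα, c⁻¹β)`, where `N` is the `c`-BCT entry
at `(1,b)` and `T(α,β) = Σ_x χ1(α x^d + β (x+1)^d)`. -/
theorem cBCT_entry_as_double_weil_sum (n d : ℕ) (hn : 1 ≤ n) (hd : 0 < d)
    {F : Type*} [Field F] [Fintype F] [DecidableEq F] [CharP F 2]
    (hcard : Fintype.card F = 2 ^ n)
    (c b : F) (hc : c ≠ 0) :
    (2 ^ (2 * n) : ℤ) *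
        ((Finset.univ.filter fun p : F × F =>
            p.1 ^ d + c * p.2 ^ d = b ∧
            (p.1 + 1) ^ d + c⁻¹ * (p.2 + 1) ^ d = b).card : ℤ) =
      ∑ α : F, ∑ β : F,
        chi n (b * (α + β)) *
          (∑ x : F, chi n (α * x ^ d + β * (x + 1) ^ d)) *
          (∑ x : F, chi n (c * α * x ^ d + c⁻¹ * β * (x + 1) ^ d)) := by
  classical
  have hmul : ∀ a a' : F, chi n a * chi n a' = chi n (a + a') :=
    fun a a' => (chi_add hcard a a').symm
  have key : ∀ α β : F,
      chi n (b * (α + β)) *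
          (∑ x : F, chi n (α * x ^ d + β * (x + 1) ^ d)) *
          (∑ x : F, chi n (c * α * x ^ d + c⁻¹ * β * (x + 1) ^ d)) =
      ∑ x : F, ∑ y : F,
        chi n (α * (x ^ d + c * y ^ d + b)) *
          chi n (β * ((x + 1) ^ d + c⁻¹ * (y + 1) ^ d + b)) := by
    intro α β
    rw [mul_assoc, Finset.sum_mul_sum, Finset.mul_sum]
    refine Finset.sum_congr rfl fun x _ => ?_
    rw [Finset.mul_sum]
    refine Finset.sum_congr rfl fun y _ => ?_
    rw [← mul_assoc, hmul, hmul, hmul]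
    congr 1
    ring
  rw [Finset.sum_congr rfl (fun α _ => Finset.sum_congr rfl (fun β _ => key α β))]
  have hswap :
      (∑ α : F, ∑ β : F, ∑ x : F, ∑ y : F,
        chi n (α * (x ^ d + c * y ^ d + b)) *
          chi n (β * ((x + 1) ^ d + c⁻¹ * (y + 1) ^ d + b))) =
      ∑ x : F, ∑ y : F, ∑ α : F, ∑ β : F,
        chi n (α * (x ^ d + c * y ^ d + b)) *
          chi n (β * ((x + 1) ^ d + c⁻¹ * (y + 1) ^ d + b)) := by
    calc (∑ α : F, ∑ β : F, ∑ x : F, ∑ y : F,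
        chi n (α * (x ^ d + c * y ^ d + b)) *
          chi n (β * ((x + 1) ^ d + c⁻¹ * (y + 1) ^ d + b)))
        = ∑ α : F, ∑ x : F, ∑ β : F, ∑ y : F,
          chi n (α * (x ^ d + c * y ^ d + b)) *
            chi n (β * ((x + 1) ^ d + c⁻¹ * (y + 1) ^ d + b)) :=
        Finset.sum_congr rfl fun α _ => Finset.sum_comm
      _ = ∑ x : F, ∑ α : F, ∑ β : F, ∑ y : F,
          chi n (α * (x ^ d + c * y ^ d + b)) *
            chi n (β * ((x + 1) ^ d + c⁻¹ * (y + 1) ^ d + b)) := Finset.sum_comm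
      _ = ∑ x : F, ∑ α : F, ∑ y : F, ∑ β : F,
          chi n (α * (x ^ d + c * y ^ d + b)) *
            chi n (β * ((x + 1) ^ d + c⁻¹ * (y + 1) ^ d + b)) :=
        Finset.sum_congr rfl fun x _ => Finset.sum_congr rfl fun α _ => Finset.sum_comm
      _ = ∑ x : F, ∑ y : F, ∑ α : F, ∑ β : F,
          chi n (α * (x ^ d + c * y ^ d + b)) *
            chi n (β * ((x + 1) ^ d + c⁻¹ * (y + 1) ^ d + b)) :=
        Finset.sum_congr rfl fun x _ => Finset.sum_comm
  rw [hswap]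
  have inner : ∀ x y : F,
      ∑ α : F, ∑ β : F,
        chi n (α * (x ^ d + c * y ^ d + b)) *
          chi n (β * ((x + 1) ^ d + c⁻¹ * (y + 1) ^ d + b)) =
      (if x ^ d + c * y ^ d + b = 0 then ((2:ℤ) ^ n) else 0) *
      (if (x + 1) ^ d + c⁻¹ * (y + 1) ^ d + b = 0 then ((2:ℤ) ^ n) else 0) := by
    intro x y
    rw [← Finset.sum_mul_sum, sum_chi_mul hn hcard, sum_chi_mul hn hcard]
  rw [Finset.sum_congr rfl (fun x _ => Finset.sum_congr rfl (fun y _ => inner x y))]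
  have hiff : ∀ t a : F, t + a = 0 ↔ t = a := by
    intro t a
    rw [← CharTwo.sub_eq_add, sub_eq_zero]
  have step : ∀ x y : F,
      (if x ^ d + c * y ^ d + b = 0 then ((2:ℤ) ^ n) else 0) *
      (if (x + 1) ^ d + c⁻¹ * (y + 1) ^ d + b = 0 then ((2:ℤ) ^ n) else 0) =
      (if x ^ d + c * y ^ d = b ∧ (x + 1) ^ d + c⁻¹ * (y + 1) ^ d = b
        then ((2:ℤ) ^ (2 * n)) else 0) := by
    intro x y
    by_cases h1 : x ^ d + c * y ^ d = b <;>
      by_cases h2 : (x + 1) ^ d + c⁻¹ * (y + 1) ^ d = b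
    · rw [if_pos ((hiff _ _).mpr h1), if_pos ((hiff _ _).mpr h2), if_pos ⟨h1, h2⟩,
        ← pow_add, two_mul]
    · rw [if_neg (fun h => h2 ((hiff _ _).mp h)),
        if_neg (fun h : _ ∧ _ => h2 h.2), mul_zero]
    · rw [if_neg (fun h => h1 ((hiff _ _).mp h)),
        if_neg (fun h : _ ∧ _ => h1 h.1), zero_mul]
    · rw [if_neg (fun h => h1 ((hiff _ _).mp h)),
        if_neg (fun h : _ ∧ _ => h1 h.1), zero_mul]
  rw [Finset.sum_congr rfl (fun x _ => Finset.sum_congr rfl (fun y _ => step x y))]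
  rw [← Fintype.sum_prod_type']
  rw [Finset.sum_ite, Finset.sum_const, Finset.sum_const_zero, add_zero, nsmul_eq_mul]
  rw [mul_comm]
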